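/- Let ψ be a degree-n Bézier quadrilateral patch in ℝ² with control vectors Δ⁰_{ij} and Δ¹_{ij}, and let r₀ and r₁ be the convex cones spanned by {Δ⁰_{ij}} and {Δ¹_{ij}} respectively. If r₀ ∩ r₁ = {0} and there exists a line through the origin with both cones (minus the origin) strictly on the same side, then the Jacobian determinant det(J) of ψ, where J = (∂ψ/∂ξ, ∂ψ/∂η), is strictly positive (up to a global orientation) at every point of [0,1]². -/

import Mathlib

noncomputable def bern (n i : ℕ) (t : ℝ) : ℝ :=
  (n.choose i : ℝ) * t ^ i * (1 - t) ^ (n - i)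

/-- The 2D determinant of a pair of vectors. -/
noncomputable def det2 (u v : EuclideanSpace ℝ (Fin 2)) : ℝ :=
  u 0 * v 1 - u 1 * v 0

lemma bern_nonneg (n i : ℕ) {t : ℝ} (h0 : 0 ≤ t) (h1 : t ≤ 1) : 0 ≤ bern n i t := by
  have h2 : (0:ℝ) ≤ 1 - t := by linarith
  unfold bern; positivity

lemma bern_sum (n : ℕ) (t : ℝ) : ∑ i : Fin (n + 1), bern n i t = 1 := by
  have h : ∑ k ∈ Finset.range (n+1), bern n k t = (t + (1 - t)) ^ n := by
    rw [add_pow]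
    exact Finset.sum_congr rfl fun k _ => by unfold bern; ring
  rw [Fin.sum_univ_eq_sum_range (fun i => bern n i t), h]
  norm_num

lemma bern_exists_pos (m : ℕ) {t : ℝ} (h0 : 0 ≤ t) (h1 : t ≤ 1) :
    ∃ k : Fin (m+1), 0 < bern m k t := by
  by_contra h
  push_neg at h
  have hz : ∑ i : Fin (m+1), bern m i t = 0 :=
    Finset.sum_eq_zero fun i _ => le_antisymm (h i) (bern_nonneg m i h0 h1)
  rw [bern_sum] at hz; norm_num at hz

lemma bern_of_lt {m k : ℕ} (h : m < k) (t : ℝ) : bern m k t = 0 := by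
  unfold bern; rw [Nat.choose_eq_zero_of_lt h]; simp

lemma bern_hasDerivAt (n i : ℕ) (hi : i ≤ n) (t : ℝ) :
    HasDerivAt (bern n i)
      ((n : ℝ) * ((if i = 0 then 0 else bern (n-1) (i-1) t) - bern (n-1) i t)) t := by
  have hp : HasDerivAt (fun s : ℝ => s ^ i) ((i:ℝ) * t ^ (i-1)) t := hasDerivAt_pow i t
  have hl : HasDerivAt (fun s : ℝ => 1 - s) (-1) t := by
    simpa using (hasDerivAt_id t).const_sub 1
  have hq : HasDerivAt (fun s : ℝ => (1 - s) ^ (n - i))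
      ((((n-i:ℕ)):ℝ) * (1 - t) ^ (n - i - 1) * (-1)) t :=
    (hasDerivAt_pow (n-i) (1-t)).comp t hl
  have hfn : bern n i = fun s : ℝ => (n.choose i : ℝ) * (s ^ i * (1 - s) ^ (n - i)) := by
    funext s; unfold bern; ring
  rw [hfn]
  have h : HasDerivAt (fun s : ℝ => (n.choose i : ℝ) * (s ^ i * (1 - s) ^ (n - i))) _ t :=
    (hp.mul hq).const_mul ((n.choose i : ℝ))
  convert h using 1
  rcases Nat.eq_zero_or_pos i with hi0 | hipos
  · subst hi0
    simp only [if_pos rfl, Nat.choose_zero_right, Nat.cast_one, Nat.sub_zero]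
    unfold bern
    simp only [Nat.choose_zero_right, Nat.cast_one, pow_zero, Nat.cast_zero, Nat.sub_zero]
    push_cast
    ring
  · obtain ⟨k, rfl⟩ : ∃ k, i = k + 1 := ⟨i - 1, by omega⟩
    have hA : (n:ℝ) * ((n-1).choose k) = (n.choose (k+1)) * (k+1) := by
      have := Nat.add_one_mul_choose_eq (n-1) k
      rw [Nat.sub_add_cancel (by omega : 1 ≤ n)] at this
      exact_mod_cast congrArg (Nat.cast (R := ℝ)) this
    have hB : (n:ℝ) * ((n-1).choose (k+1)) = (n.choose (k+1)) * ((n:ℝ) - (k+1)) := by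
      have h1 := Nat.add_one_mul_choose_eq (n-1) (k+1)
      rw [Nat.sub_add_cancel (by omega : 1 ≤ n)] at h1
      have h2 := Nat.choose_succ_right_eq n (k+1)
      have h3 : ((n.choose (k+1) : ℕ) * (n - (k+1)) : ℕ) = (n.choose (k+1) : ℝ) * ((n:ℝ) - (k+1)) := by
        push_cast [Nat.cast_sub hi]
        ring
      calc (n:ℝ) * ((n-1).choose (k+1)) = ((n * (n-1).choose (k+1) : ℕ) : ℝ) := by push_cast; ring
        _ = ((n.choose (k+1+1) * (k+1+1) : ℕ) : ℝ) := by rw [h1]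
        _ = ((n.choose (k+1) * (n - (k+1)) : ℕ) : ℝ) := by rw [h2]
        _ = (n.choose (k+1) : ℝ) * ((n:ℝ) - (k+1)) := h3
    simp only [Nat.add_sub_cancel, if_neg (Nat.succ_ne_zero k)]
    unfold bern
    have e1 : n - 1 - k = n - (k+1) := by omega
    have e2 : n - (k+1) - 1 = n - 1 - (k+1) := by omega
    have e3 : (((n - (k+1) : ℕ)):ℝ) = (n:ℝ) - (k+1) := by
      push_cast [Nat.cast_sub hi]; ring
    rw [e1, e2, e3]
    push_cast
    linear_combination (t^k * (1-t)^(n-(k+1))) * hA - (t^(k+1) * (1-t)^(n-1-(k+1))) * hB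

lemma bern_abel {E : Type*} [AddCommGroup E] [Module ℝ E] (n : ℕ) (hn : 0 < n) (t : ℝ)
    (v : Fin (n+1) → E) :
    ∑ i : Fin (n+1),
      ((n:ℝ) * ((if (i:ℕ) = 0 then 0 else bern (n-1) ((i:ℕ)-1) t) - bern (n-1) (i:ℕ) t)) • v i
    = (n:ℝ) • ∑ i : Fin n, bern (n-1) (i:ℕ) t • (v i.succ - v i.castSucc) := by
  have h1 : ∑ i : Fin (n+1), (if (i:ℕ) = 0 then (0:ℝ) else bern (n-1) ((i:ℕ)-1) t) • v i
      = ∑ i : Fin n, bern (n-1) (i:ℕ) t • v i.succ := by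
    rw [Fin.sum_univ_succ]
    simp [Fin.val_succ]
  have h2 : ∑ i : Fin (n+1), bern (n-1) (i:ℕ) t • v i
      = ∑ i : Fin n, bern (n-1) (i:ℕ) t • v i.castSucc := by
    rw [Fin.sum_univ_castSucc]
    rw [show ((Fin.last n : Fin (n+1)) : ℕ) = n from rfl, bern_of_lt (by omega) t]
    simp
  calc ∑ i : Fin (n+1),
      ((n:ℝ) * ((if (i:ℕ) = 0 then 0 else bern (n-1) ((i:ℕ)-1) t) - bern (n-1) (i:ℕ) t)) • v i
      = (n:ℝ) • ((∑ i : Fin (n+1), (if (i:ℕ) = 0 then (0:ℝ) else bern (n-1) ((i:ℕ)-1) t) • v i)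
          - ∑ i : Fin (n+1), bern (n-1) (i:ℕ) t • v i) := by
        rw [smul_sub, Finset.smul_sum, Finset.smul_sum, ← Finset.sum_sub_distrib]
        exact Finset.sum_congr rfl fun i _ => by rw [mul_smul, sub_smul, smul_sub]
    _ = (n:ℝ) • ∑ i : Fin n, bern (n-1) (i:ℕ) t • (v i.succ - v i.castSucc) := by
        rw [h1, h2, ← Finset.sum_sub_distrib]
        exact congrArg _ (Finset.sum_congr rfl fun i _ => (smul_sub _ _ _).symm)

lemma det2_zero_left (v : EuclideanSpace ℝ (Fin 2)) : det2 0 v = 0 := by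
  simp [det2]

lemma det2_zero_right (v : EuclideanSpace ℝ (Fin 2)) : det2 v 0 = 0 := by
  simp [det2]

lemma det2_add_smul_left (x y v : EuclideanSpace ℝ (Fin 2)) (t : ℝ) :
    det2 (x + t • y) v = det2 x v + t * det2 y v := by
  simp only [det2, PiLp.add_apply, PiLp.smul_apply, smul_eq_mul]; ring

lemma det2_add_smul_right (v x y : EuclideanSpace ℝ (Fin 2)) (s : ℝ) :
    det2 v (x + s • y) = det2 v x + s * det2 v y := by
  simp only [det2, PiLp.add_apply, PiLp.smul_apply, smul_eq_mul]; ring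

lemma det2_smul_smul (a b : ℝ) (x y : EuclideanSpace ℝ (Fin 2)) :
    det2 (a • x) (b • y) = (a * b) * det2 x y := by
  simp only [det2, PiLp.smul_apply, smul_eq_mul]; ring

lemma det2_dep {a b : EuclideanSpace ℝ (Fin 2)} (ha : a ≠ 0) (h : det2 a b = 0) :
    ∃ l : ℝ, b = l • a := by
  have hab : a 0 * b 1 - a 1 * b 0 = 0 := h
  have ha' : a 0 ≠ 0 ∨ a 1 ≠ 0 := by
    by_contra hc
    push_neg at hc
    exact ha (by ext k; fin_cases k <;> simp [hc.1, hc.2])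
  rcases ha' with h0 | h1
  · refine ⟨b 0 / a 0, ?_⟩
    ext k; fin_cases k <;> simp only [PiLp.smul_apply, smul_eq_mul, Fin.zero_eta, Fin.mk_one] <;> field_simp <;> linarith
  · refine ⟨b 1 / a 1, ?_⟩
    ext k; fin_cases k <;> simp only [PiLp.smul_apply, smul_eq_mul, Fin.zero_eta, Fin.mk_one] <;> field_simp <;> linarith

set_option maxHeartbeats 1000000 in
/-- Validity of a high-order Bézier quadrilateral element: if the convex
cones spanned by the 0- and 1-control vectors intersect only at the origin and lie
strictly on the same side of a line through the origin (and the orientation is chosen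
so that some pair has positive determinant), then the Jacobian determinant of the patch
is strictly positive everywhere on [0,1]². -/
theorem bezier_quad_valid (n : ℕ) (hn : 0 < n)
    (Q : Fin (n + 1) → Fin (n + 1) → EuclideanSpace ℝ (Fin 2))
    (ψ : ℝ × ℝ → EuclideanSpace ℝ (Fin 2))
    (hψ : ψ = fun p => ∑ i : Fin (n + 1), ∑ j : Fin (n + 1),
      (bern n i p.1 * bern n j p.2) • Q i j)
    (Δ₀ : Fin n → Fin (n + 1) → EuclideanSpace ℝ (Fin 2))
    (hΔ₀ : ∀ i j, Δ₀ i j = Q i.succ j - Q i.castSucc j)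
    (Δ₁ : Fin (n + 1) → Fin n → EuclideanSpace ℝ (Fin 2))
    (hΔ₁ : ∀ i j, Δ₁ i j = Q i j.succ - Q i j.castSucc)
    (hΔ₀ne : ∀ i j, Δ₀ i j ≠ 0) (hΔ₁ne : ∀ i j, Δ₁ i j ≠ 0)
    (r₀ r₁ : Set (EuclideanSpace ℝ (Fin 2)))
    (hr₀ : r₀ = {x | ∃ c : Fin n × Fin (n + 1) → ℝ, (∀ p, 0 ≤ c p) ∧
      x = ∑ p : Fin n × Fin (n + 1), c p • Δ₀ p.1 p.2})
    (hr₁ : r₁ = {x | ∃ c : Fin (n + 1) × Fin n → ℝ, (∀ p, 0 ≤ c p) ∧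
      x = ∑ p : Fin (n + 1) × Fin n, c p • Δ₁ p.1 p.2})
    (hinter : r₀ ∩ r₁ = {0})
    (φ : EuclideanSpace ℝ (Fin 2) →ₗ[ℝ] ℝ)
    (hφ : ∀ w ∈ r₀ ∪ r₁, w ≠ 0 → 0 < φ w)
    (horient : ∃ u ∈ r₀, ∃ v ∈ r₁, 0 < det2 u v) :
    ∀ ξ η : ℝ, ξ ∈ Set.Icc (0 : ℝ) 1 → η ∈ Set.Icc (0 : ℝ) 1 →
      0 < det2 (fderiv ℝ ψ (ξ, η) (1, 0)) (fderiv ℝ ψ (ξ, η) (0, 1)) := by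
  intro ξ η hξ hη
  obtain ⟨hξ0, hξ1⟩ := hξ
  obtain ⟨hη0, hη1⟩ := hη
  -- cone closure properties
  have hr₀smul : ∀ (t : ℝ), 0 ≤ t → ∀ x ∈ r₀, t • x ∈ r₀ := by
    intro t ht x hx
    rw [hr₀] at hx ⊢
    obtain ⟨c, hc, rfl⟩ := hx
    exact ⟨fun p => t * c p, fun p => mul_nonneg ht (hc p),
      by rw [Finset.smul_sum]; exact Finset.sum_congr rfl fun p _ => (mul_smul _ _ _).symm⟩
  have hr₁smul : ∀ (t : ℝ), 0 ≤ t → ∀ x ∈ r₁, t • x ∈ r₁ := by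
    intro t ht x hx
    rw [hr₁] at hx ⊢
    obtain ⟨c, hc, rfl⟩ := hx
    exact ⟨fun p => t * c p, fun p => mul_nonneg ht (hc p),
      by rw [Finset.smul_sum]; exact Finset.sum_congr rfl fun p _ => (mul_smul _ _ _).symm⟩
  have hr₀add : ∀ x ∈ r₀, ∀ y ∈ r₀, x + y ∈ r₀ := by
    intro x hx y hy
    rw [hr₀] at hx hy ⊢
    obtain ⟨c, hc, rfl⟩ := hx
    obtain ⟨d, hd, rfl⟩ := hy
    exact ⟨fun p => c p + d p, fun p => add_nonneg (hc p) (hd p),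
      by rw [← Finset.sum_add_distrib]; exact Finset.sum_congr rfl fun p _ => (add_smul _ _ _).symm⟩
  have hr₁add : ∀ x ∈ r₁, ∀ y ∈ r₁, x + y ∈ r₁ := by
    intro x hx y hy
    rw [hr₁] at hx hy ⊢
    obtain ⟨c, hc, rfl⟩ := hx
    obtain ⟨d, hd, rfl⟩ := hy
    exact ⟨fun p => c p + d p, fun p => add_nonneg (hc p) (hd p),
      by rw [← Finset.sum_add_distrib]; exact Finset.sum_congr rfl fun p _ => (add_smul _ _ _).symm⟩
  have hφpos₀ : ∀ x ∈ r₀, x ≠ 0 → 0 < φ x := fun x hx => hφ x (Or.inl hx)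
  have hφpos₁ : ∀ x ∈ r₁, x ≠ 0 → 0 < φ x := fun x hx => hφ x (Or.inr hx)
  -- nonvanishing of det2 on the product of the punctured cones
  have hne : ∀ a ∈ r₀, 0 < φ a → ∀ b ∈ r₁, 0 < φ b → det2 a b ≠ 0 := by
    intro a ha hfa b hb hfb hdet
    have ha0 : a ≠ 0 := by rintro rfl; simp at hfa
    obtain ⟨l, rfl⟩ := det2_dep ha0 hdet
    have hfb' : φ (l • a) = l * φ a := by simp
    have hl : 0 < l := by
      by_contra hl
      push_neg at hl
      nlinarith [hfb, hfb']
    have hmem : l • a ∈ r₀ ∩ r₁ := ⟨hr₀smul l hl.le a ha, hb⟩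
    rw [hinter, Set.mem_singleton_iff] at hmem
    rw [hmem] at hfb
    simp at hfb
  -- sign consistency
  have key : ∀ a ∈ r₀, 0 < φ a → ∀ b ∈ r₁, 0 < φ b → 0 < det2 a b := by
    obtain ⟨u, hu, v, hv, huv⟩ := horient
    have hu0 : u ≠ 0 := fun h => by rw [h, det2_zero_left] at huv; exact lt_irrefl _ huv
    have hv0 : v ≠ 0 := fun h => by rw [h, det2_zero_right] at huv; exact lt_irrefl _ huv
    have hfu : 0 < φ u := hφpos₀ u hu hu0
    have hfv : 0 < φ v := hφpos₁ v hv hv0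
    intro a ha hfa b hb hfb
    have hA : 0 < det2 a v := by
      rcases lt_trichotomy (det2 a v) 0 with h | h | h
      · exfalso
        have hs0 : 0 < det2 u v / (-det2 a v) := div_pos huv (by linarith)
        have hmem : u + (det2 u v / (-det2 a v)) • a ∈ r₀ :=
          hr₀add _ hu _ (hr₀smul _ hs0.le a ha)
        have hfm : 0 < φ (u + (det2 u v / (-det2 a v)) • a) := by
          have he : φ (u + (det2 u v / (-det2 a v)) • a)
              = φ u + (det2 u v / (-det2 a v)) * φ a := by simp
          rw [he]; positivity
        have hzz : det2 a v ≠ 0 := ne_of_lt h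
        refine hne _ hmem hfm v hv hfv ?_
        rw [det2_add_smul_left, div_mul_eq_mul_div, mul_div_assoc, div_neg, div_self hzz]
        ring
      · exact absurd h (hne a ha hfa v hv hfv)
      · exact h
    rcases lt_trichotomy (det2 a b) 0 with h | h | h
    · exfalso
      have hs0 : 0 < det2 a v / (-det2 a b) := div_pos hA (by linarith)
      have hmem : v + (det2 a v / (-det2 a b)) • b ∈ r₁ :=
        hr₁add _ hv _ (hr₁smul _ hs0.le b hb)
      have hfm : 0 < φ (v + (det2 a v / (-det2 a b)) • b) := by
        have he : φ (v + (det2 a v / (-det2 a b)) • b)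
            = φ v + (det2 a v / (-det2 a b)) * φ b := by simp
        rw [he]; positivity
      have hzz : det2 a b ≠ 0 := ne_of_lt h
      refine hne a ha hfa _ hmem hfm ?_
      rw [det2_add_smul_right, div_mul_eq_mul_div, mul_div_assoc, div_neg, div_self hzz]
      ring
    · exact absurd h (hne a ha hfa b hb hfb)
    · exact h
  -- generators lie in the cones
  have hgen₀ : ∀ i j, Δ₀ i j ∈ r₀ := by
    intro i j
    rw [hr₀]
    refine ⟨fun p => if p = (i, j) then 1 else 0, fun p => by by_cases hp : p = (i, j) <;> simp [hp], ?_⟩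
    simp [ite_smul]
  have hgen₁ : ∀ i j, Δ₁ i j ∈ r₁ := by
    intro i j
    rw [hr₁]
    refine ⟨fun p => if p = (i, j) then 1 else 0, fun p => by by_cases hp : p = (i, j) <;> simp [hp], ?_⟩
    simp [ite_smul]
  -- the derivative
  subst hψ
  have hF : HasFDerivAt (fun p : ℝ × ℝ => ∑ i : Fin (n+1), ∑ j : Fin (n+1),
        (bern n i p.1 * bern n j p.2) • Q i j)
      (∑ i : Fin (n+1), ∑ j : Fin (n+1),
        ((bern n (i:ℕ) ξ • (((n:ℝ) * ((if (j:ℕ) = 0 then 0 else bern (n-1) ((j:ℕ)-1) η)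
              - bern (n-1) (j:ℕ) η)) • ContinuousLinearMap.snd ℝ ℝ ℝ)
          + bern n (j:ℕ) η • (((n:ℝ) * ((if (i:ℕ) = 0 then 0 else bern (n-1) ((i:ℕ)-1) ξ)
              - bern (n-1) (i:ℕ) ξ)) • ContinuousLinearMap.fst ℝ ℝ ℝ)).smulRight (Q i j)))
      (ξ, η) := by
    apply HasFDerivAt.fun_sum
    intro i _
    apply HasFDerivAt.fun_sum
    intro j _
    have hci : HasFDerivAt (fun p : ℝ × ℝ => bern n (i:ℕ) p.1)
        ((((n:ℝ) * ((if (i:ℕ) = 0 then 0 else bern (n-1) ((i:ℕ)-1) ξ)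
            - bern (n-1) (i:ℕ) ξ))) • ContinuousLinearMap.fst ℝ ℝ ℝ) (ξ, η) :=
      by have := (bern_hasDerivAt n i i.is_le ξ).comp_hasFDerivAt (ξ, η) (hasFDerivAt_fst (𝕜 := ℝ)); exact this
    have hcj : HasFDerivAt (fun p : ℝ × ℝ => bern n (j:ℕ) p.2)
        ((((n:ℝ) * ((if (j:ℕ) = 0 then 0 else bern (n-1) ((j:ℕ)-1) η)
            - bern (n-1) (j:ℕ) η))) • ContinuousLinearMap.snd ℝ ℝ ℝ) (ξ, η) :=
      by have := (bern_hasDerivAt n j j.is_le η).comp_hasFDerivAt (ξ, η) (hasFDerivAt_snd (𝕜 := ℝ)); exact this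
    exact (hci.mul hcj).smul_const (Q i j)
  rw [hF.fderiv]
  -- evaluate the derivative in the two coordinate directions
  have hXval : (∑ i : Fin (n+1), ∑ j : Fin (n+1),
        ((bern n (i:ℕ) ξ • (((n:ℝ) * ((if (j:ℕ) = 0 then 0 else bern (n-1) ((j:ℕ)-1) η)
              - bern (n-1) (j:ℕ) η)) • ContinuousLinearMap.snd ℝ ℝ ℝ)
          + bern n (j:ℕ) η • (((n:ℝ) * ((if (i:ℕ) = 0 then 0 else bern (n-1) ((i:ℕ)-1) ξ)
              - bern (n-1) (i:ℕ) ξ)) • ContinuousLinearMap.fst ℝ ℝ ℝ)).smulRight (Q i j)))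
        ((1:ℝ), (0:ℝ))
      = ∑ i : Fin (n+1), ∑ j : Fin (n+1), (bern n (j:ℕ) η *
          ((n:ℝ) * ((if (i:ℕ) = 0 then 0 else bern (n-1) ((i:ℕ)-1) ξ)
            - bern (n-1) (i:ℕ) ξ))) • Q i j := by
    simp [ContinuousLinearMap.sum_apply, ContinuousLinearMap.smulRight_apply,
      ContinuousLinearMap.add_apply, ContinuousLinearMap.smul_apply]
  have hYval : (∑ i : Fin (n+1), ∑ j : Fin (n+1),
        ((bern n (i:ℕ) ξ • (((n:ℝ) * ((if (j:ℕ) = 0 then 0 else bern (n-1) ((j:ℕ)-1) η)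
              - bern (n-1) (j:ℕ) η)) • ContinuousLinearMap.snd ℝ ℝ ℝ)
          + bern n (j:ℕ) η • (((n:ℝ) * ((if (i:ℕ) = 0 then 0 else bern (n-1) ((i:ℕ)-1) ξ)
              - bern (n-1) (i:ℕ) ξ)) • ContinuousLinearMap.fst ℝ ℝ ℝ)).smulRight (Q i j)))
        ((0:ℝ), (1:ℝ))
      = ∑ i : Fin (n+1), ∑ j : Fin (n+1), (bern n (i:ℕ) ξ *
          ((n:ℝ) * ((if (j:ℕ) = 0 then 0 else bern (n-1) ((j:ℕ)-1) η)
            - bern (n-1) (j:ℕ) η))) • Q i j := by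
    simp [ContinuousLinearMap.sum_apply, ContinuousLinearMap.smulRight_apply,
      ContinuousLinearMap.add_apply, ContinuousLinearMap.smul_apply]
  set x : EuclideanSpace ℝ (Fin 2) :=
    ∑ p : Fin n × Fin (n+1), (bern (n-1) (p.1:ℕ) ξ * bern n (p.2:ℕ) η) • Δ₀ p.1 p.2 with hx
  set y : EuclideanSpace ℝ (Fin 2) :=
    ∑ p : Fin (n+1) × Fin n, (bern n (p.1:ℕ) ξ * bern (n-1) (p.2:ℕ) η) • Δ₁ p.1 p.2 with hy
  have hX2 : ∑ i : Fin (n+1), ∑ j : Fin (n+1), (bern n (j:ℕ) η *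
        ((n:ℝ) * ((if (i:ℕ) = 0 then 0 else bern (n-1) ((i:ℕ)-1) ξ)
          - bern (n-1) (i:ℕ) ξ))) • Q i j = (n:ℝ) • x := by
    rw [Finset.sum_comm]
    calc ∑ j : Fin (n+1), ∑ i : Fin (n+1), (bern n (j:ℕ) η *
          ((n:ℝ) * ((if (i:ℕ) = 0 then 0 else bern (n-1) ((i:ℕ)-1) ξ)
            - bern (n-1) (i:ℕ) ξ))) • Q i j
        = ∑ j : Fin (n+1), ∑ i : Fin (n+1),
            ((n:ℝ) * ((if (i:ℕ) = 0 then 0 else bern (n-1) ((i:ℕ)-1) ξ)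
              - bern (n-1) (i:ℕ) ξ)) • (bern n (j:ℕ) η • Q i j) := by
          refine Finset.sum_congr rfl fun j _ => Finset.sum_congr rfl fun i _ => ?_
          rw [smul_smul, mul_comm]
      _ = ∑ j : Fin (n+1), (n:ℝ) • ∑ i : Fin n, bern (n-1) (i:ℕ) ξ •
            (bern n (j:ℕ) η • Q i.succ j - bern n (j:ℕ) η • Q i.castSucc j) := by
          exact Finset.sum_congr rfl fun j _ => bern_abel n hn ξ (fun i => bern n (j:ℕ) η • Q i j)
      _ = (n:ℝ) • x := by
          rw [← Finset.smul_sum]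
          refine congrArg (fun z : EuclideanSpace ℝ (Fin 2) => (n:ℝ) • z) ?_
          rw [hx, Fintype.sum_prod_type, Finset.sum_comm]
          refine Finset.sum_congr rfl fun j _ => Finset.sum_congr rfl fun i _ => ?_
          rw [hΔ₀, ← smul_sub, smul_smul]
  have hY2 : ∑ i : Fin (n+1), ∑ j : Fin (n+1), (bern n (i:ℕ) ξ *
        ((n:ℝ) * ((if (j:ℕ) = 0 then 0 else bern (n-1) ((j:ℕ)-1) η)
          - bern (n-1) (j:ℕ) η))) • Q i j = (n:ℝ) • y := by
    calc ∑ i : Fin (n+1), ∑ j : Fin (n+1), (bern n (i:ℕ) ξ *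
          ((n:ℝ) * ((if (j:ℕ) = 0 then 0 else bern (n-1) ((j:ℕ)-1) η)
            - bern (n-1) (j:ℕ) η))) • Q i j
        = ∑ i : Fin (n+1), ∑ j : Fin (n+1),
            ((n:ℝ) * ((if (j:ℕ) = 0 then 0 else bern (n-1) ((j:ℕ)-1) η)
              - bern (n-1) (j:ℕ) η)) • (bern n (i:ℕ) ξ • Q i j) := by
          refine Finset.sum_congr rfl fun i _ => Finset.sum_congr rfl fun j _ => ?_
          rw [smul_smul, mul_comm]
      _ = ∑ i : Fin (n+1), (n:ℝ) • ∑ j : Fin n, bern (n-1) (j:ℕ) η •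
            (bern n (i:ℕ) ξ • Q i j.succ - bern n (i:ℕ) ξ • Q i j.castSucc) := by
          exact Finset.sum_congr rfl fun i _ => bern_abel n hn η (fun j => bern n (i:ℕ) ξ • Q i j)
      _ = (n:ℝ) • y := by
          rw [← Finset.smul_sum]
          refine congrArg (fun z : EuclideanSpace ℝ (Fin 2) => (n:ℝ) • z) ?_
          rw [hy, Fintype.sum_prod_type]
          refine Finset.sum_congr rfl fun i _ => Finset.sum_congr rfl fun j _ => ?_
          rw [hΔ₁, ← smul_sub, smul_smul, mul_comm]
  -- x and y lie in the cones and have positive φ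
  have hxmem : x ∈ r₀ := by
    rw [hr₀]
    exact ⟨fun p => bern (n-1) (p.1:ℕ) ξ * bern n (p.2:ℕ) η,
      fun p => mul_nonneg (bern_nonneg _ _ hξ0 hξ1) (bern_nonneg _ _ hη0 hη1), hx⟩
  have hymem : y ∈ r₁ := by
    rw [hr₁]
    exact ⟨fun p => bern n (p.1:ℕ) ξ * bern (n-1) (p.2:ℕ) η,
      fun p => mul_nonneg (bern_nonneg _ _ hξ0 hξ1) (bern_nonneg _ _ hη0 hη1), hy⟩
  have hφx : 0 < φ x := by
    rw [hx, map_sum]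
    apply Finset.sum_pos'
    · intro p _
      simp only [map_smul, smul_eq_mul]
      exact mul_nonneg (mul_nonneg (bern_nonneg _ _ hξ0 hξ1) (bern_nonneg _ _ hη0 hη1))
        (hφpos₀ _ (hgen₀ _ _) (hΔ₀ne _ _)).le
    · obtain ⟨k, hk⟩ := bern_exists_pos (n-1) hξ0 hξ1
      obtain ⟨m, hm⟩ := bern_exists_pos n hη0 hη1
      refine ⟨(⟨(k:ℕ), by omega⟩, m), Finset.mem_univ _, ?_⟩
      simp only [map_smul, smul_eq_mul]
      exact mul_pos (mul_pos hk hm) (hφpos₀ _ (hgen₀ _ _) (hΔ₀ne _ _))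
  have hφy : 0 < φ y := by
    rw [hy, map_sum]
    apply Finset.sum_pos'
    · intro p _
      simp only [map_smul, smul_eq_mul]
      exact mul_nonneg (mul_nonneg (bern_nonneg _ _ hξ0 hξ1) (bern_nonneg _ _ hη0 hη1))
        (hφpos₁ _ (hgen₁ _ _) (hΔ₁ne _ _)).le
    · obtain ⟨k, hk⟩ := bern_exists_pos n hξ0 hξ1
      obtain ⟨m, hm⟩ := bern_exists_pos (n-1) hη0 hη1
      refine ⟨(k, ⟨(m:ℕ), by omega⟩), Finset.mem_univ _, ?_⟩
      simp only [map_smul, smul_eq_mul]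
      exact mul_pos (mul_pos hk hm) (hφpos₁ _ (hgen₁ _ _) (hΔ₁ne _ _))
  rw [hXval, hX2, hYval, hY2, det2_smul_smul]
  have hn' : (0:ℝ) < n := Nat.cast_pos.mpr hn
  exact mul_pos (mul_pos hn' hn') (key x hxmem hφx y hymem hφy)
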